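/- Fix an integer 0 ≤ i ≤ k−1 with A_i ≠ ∅ and vertices x, y ∈ V, and let m = max{d_G(x, p_i(x)), d_G(y, p_i(y)), d_G(x, y)}. Then at least one of the following holds: (1) d_H(x, y) ≤ 5m; or (2) A_{i+1} ≠ ∅ and d_H(x, p_{i+1}(x)) ≤ 7m. -/

import Mathlib

open scoped ENNReal Classical

namespace ASP

variable {V : Type*}

noncomputable def wWeight {G : SimpleGraph V} (w : V → V → ℝ≥0∞) {x y : V}
    (p : G.Walk x y) : ℝ≥0∞ :=
  (p.darts.map fun d => w d.toProd.1 d.toProd.2).sum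

noncomputable def gdist (G : SimpleGraph V) (w : V → V → ℝ≥0∞) (x y : V) : ℝ≥0∞ :=
  ⨅ p : G.Walk x y, wWeight w p

noncomputable def maxW {G : SimpleGraph V} (w : V → V → ℝ≥0∞) {x y : V}
    (p : G.Walk x y) : ℝ≥0∞ :=
  (p.darts.map fun d => w d.toProd.1 d.toProd.2).foldr max 0

/-- The half-bunch of a vertex `u` of level `i`: all vertices of `A i` closer to `u` than half
the distance from `u` to `A (i+1)` (vacuously all of `A i` if `A (i+1) = ∅`), together with the
pivots of all nonempty higher levels. -/
def halfBunch (G : SimpleGraph V) (w : V → V → ℝ≥0∞) (A : ℕ → Set V) (pv : ℕ → V → V)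
    (k i : ℕ) (u : V) : Set V :=
  {v | v ∈ A i ∧ ∀ a ∈ A (i + 1), gdist G w u v < gdist G w u a / 2} ∪
    {v | ∃ j, i < j ∧ j < k ∧ (A j).Nonempty ∧ v = pv j u}

/-- The spanner `H`: the subgraph of `G` which is the union of the fixed shortest paths `P u v`
over all `u ∈ A i \ A (i+1)` and `v` in the half-bunch of `u`. -/
def spanGraph (G : SimpleGraph V) (w : V → V → ℝ≥0∞) (A : ℕ → Set V) (pv : ℕ → V → V)
    (k : ℕ) (P : ∀ u v : V, G.Walk u v) : SimpleGraph V where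
  Adj a b := ∃ u v i, u ∈ A i ∧ u ∉ A (i + 1) ∧ v ∈ halfBunch G w A pv k i u ∧
      s(a, b) ∈ (P u v).edges
  symm := by
    constructor
    rintro a b ⟨u, v, i, h1, h2, h3, he⟩
    exact ⟨u, v, i, h1, h2, h3, by rwa [Sym2.eq_swap] at he⟩
  loopless := by
    constructor
    rintro a ⟨u, v, i, _, _, _, he⟩
    exact G.loopless.irrefl a ((P u v).adj_of_mem_edges he)

/-! ### Auxiliary lemmas -/

lemma wWeight_append {G : SimpleGraph V} (w : V → V → ℝ≥0∞) {x y z : V}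
    (p : G.Walk x y) (q : G.Walk y z) :
    wWeight w (p.append q) = wWeight w p + wWeight w q := by
  simp [wWeight, SimpleGraph.Walk.darts_append]

lemma wWeight_reverse {G : SimpleGraph V} {w : V → V → ℝ≥0∞}
    (hwsym : ∀ u v, G.Adj u v → w u v = w v u) {x y : V} (p : G.Walk x y) :
    wWeight w p.reverse = wWeight w p := by
  simp only [wWeight, SimpleGraph.Walk.darts_reverse, List.map_reverse, List.sum_reverse,
    List.map_map]
  congr 1
  apply List.map_congr_left
  intro d hd
  exact (hwsym _ _ d.adj).symm

lemma gdist_le {G : SimpleGraph V} (w : V → V → ℝ≥0∞) {x y : V} (p : G.Walk x y) :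
    gdist G w x y ≤ wWeight w p := iInf_le _ p

lemma gdist_self (G : SimpleGraph V) (w : V → V → ℝ≥0∞) (x : V) :
    gdist G w x x = 0 :=
  le_antisymm (gdist_le w SimpleGraph.Walk.nil) (zero_le)

lemma gdist_triangle (G : SimpleGraph V) (w : V → V → ℝ≥0∞) (x y z : V) :
    gdist G w x z ≤ gdist G w x y + gdist G w y z := by
  simp only [gdist, ENNReal.iInf_add, ENNReal.add_iInf]
  refine le_iInf fun p => le_iInf fun q => ?_
  first
  | exact iInf_le_of_le (p.append q) (wWeight_append w p q).le
  | exact iInf_le_of_le (q.append p) (wWeight_append w q p).le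

lemma gdist_comm {G : SimpleGraph V} {w : V → V → ℝ≥0∞}
    (hwsym : ∀ u v, G.Adj u v → w u v = w v u) (x y : V) :
    gdist G w x y = gdist G w y x := by
  have h : ∀ a b : V, gdist G w a b ≤ gdist G w b a := fun a b =>
    le_iInf fun p => (gdist_le w p.reverse).trans_eq (wWeight_reverse hwsym p)
  exact le_antisymm (h x y) (h y x)

lemma exists_walk_of_edges {G H : SimpleGraph V} (w : V → V → ℝ≥0∞) {x y : V}
    (p : G.Walk x y) (h : ∀ a b, s(a,b) ∈ p.edges → H.Adj a b) :
    ∃ q : H.Walk x y, wWeight w q = wWeight w p := by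
  induction p with
  | nil => exact ⟨SimpleGraph.Walk.nil, rfl⟩
  | @cons a b c hadj p ih =>
    obtain ⟨q, hq⟩ := ih fun u v hm => h u v (by simp [hm])
    refine ⟨SimpleGraph.Walk.cons (h a b (by simp)) q, ?_⟩
    simp [wWeight] at hq ⊢
    exact congrArg (w a b + ·) hq

section Main

variable {G : SimpleGraph V} {w : V → V → ℝ≥0∞} {A : ℕ → Set V} {pv : ℕ → V → V}
  {k : ℕ} {P : ∀ u v : V, G.Walk u v}

lemma spanGraph_le_adj {a b : V}
    (h : (spanGraph G w A pv k P).Adj a b) : G.Adj a b := by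
  obtain ⟨u, v, i, _, _, _, he⟩ := h
  exact (P u v).adj_of_mem_edges he

lemma A_subset (hAnest : ∀ i, A (i + 1) ⊆ A i) {s t : ℕ} (h : s ≤ t) : A t ⊆ A s := by
  induction h with
  | refl => exact subset_rfl
  | step h ih => exact (hAnest _).trans ih

lemma nonempty_lt_k (hAnest : ∀ i, A (i + 1) ⊆ A i) (hAk : A k = ∅) {j : ℕ}
    (h : (A j).Nonempty) : j < k := by
  by_contra h'
  push_neg at h'
  obtain ⟨v, hv⟩ := h
  have := A_subset hAnest h' hv
  rw [hAk] at this
  exact this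

lemma exists_level (hA0 : A 0 = Set.univ) {x : V} {t : ℕ} (hx : x ∉ A t) :
    ∃ l, l < t ∧ x ∈ A l ∧ x ∉ A (l + 1) := by
  induction t with
  | zero => exact absurd (hA0 ▸ Set.mem_univ x) hx
  | succ t ih =>
    by_cases h : x ∈ A t
    · exact ⟨t, lt_add_one t, h, hx⟩
    · obtain ⟨l, hl, h1, h2⟩ := ih h
      exact ⟨l, hl.trans (lt_add_one t), h1, h2⟩

lemma dH_le_bunch (hP : ∀ u v i, u ∈ A i → u ∉ A (i + 1) → v ∈ halfBunch G w A pv k i u →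
      (P u v).IsPath ∧ wWeight w (P u v) = gdist G w u v)
    {u v : V} {l : ℕ} (hu1 : u ∈ A l) (hu2 : u ∉ A (l + 1))
    (hv : v ∈ halfBunch G w A pv k l u) :
    gdist (spanGraph G w A pv k P) w u v ≤ gdist G w u v := by
  obtain ⟨-, hw⟩ := hP u v l hu1 hu2 hv
  obtain ⟨q, hq⟩ := exists_walk_of_edges (H := spanGraph G w A pv k P) w (P u v)
    (fun a b hm => ⟨u, v, l, hu1, hu2, hv, hm⟩)
  exact (gdist_le w q).trans_eq (hq.trans hw)

lemma dH_pivot (hA0 : A 0 = Set.univ)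
    (hP : ∀ u v i, u ∈ A i → u ∉ A (i + 1) → v ∈ halfBunch G w A pv k i u →
      (P u v).IsPath ∧ wWeight w (P u v) = gdist G w u v)
    {v : V} {t : ℕ} (ht : t < k) (hAt : (A t).Nonempty) (hv : v ∉ A t) :
    gdist (spanGraph G w A pv k P) w v (pv t v) ≤ gdist G w v (pv t v) := by
  obtain ⟨l, hl, h1, h2⟩ := exists_level hA0 hv
  exact dH_le_bunch hP h1 h2 (Or.inr ⟨t, hl, ht, hAt, rfl⟩)

lemma Qlem (hwsym : ∀ u v, G.Adj u v → w u v = w v u)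
    (hA0 : A 0 = Set.univ) (hAnest : ∀ i, A (i + 1) ⊆ A i) (hAk : A k = ∅)
    (hpv : ∀ i, i < k → ∀ v : V, (A i).Nonempty →
      pv i v ∈ A i ∧ ∀ a ∈ A i, gdist G w v (pv i v) ≤ gdist G w v a)
    (hP : ∀ u v i, u ∈ A i → u ∉ A (i + 1) → v ∈ halfBunch G w A pv k i u →
      (P u v).IsPath ∧ wWeight w (P u v) = gdist G w u v) :
    ∀ n j u z, k ≤ j + n → u ∈ A j → z ∈ A j → gdist G w u z = 0 →
      gdist (spanGraph G w A pv k P) w u z = 0 := by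
  have hwsymH : ∀ u v, (spanGraph G w A pv k P).Adj u v → w u v = w v u :=
    fun u v h => hwsym u v (spanGraph_le_adj h)
  intro n
  induction n with
  | zero =>
    intro j u z hkj hu _ _
    have h := A_subset hAnest (by omega : k ≤ j) hu
    rw [hAk] at h
    exact h.elim
  | succ n ih =>
    intro j u z hkj hu hz hd
    -- key: if u ∈ A (j+1) and z ∉ A (j+1) then dH u z = 0
    have key : ∀ u z : V, u ∈ A j → z ∈ A j → u ∈ A (j + 1) → z ∉ A (j + 1) →
        gdist G w u z = 0 → gdist (spanGraph G w A pv k P) w u z = 0 := by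
      intro u z hu hz hu1 hz1 hd
      have hne : (A (j + 1)).Nonempty := ⟨u, hu1⟩
      have hjk : j + 1 < k := nonempty_lt_k hAnest hAk hne
      obtain ⟨hqA, hqmin⟩ := hpv (j + 1) hjk z hne
      have hGzq : gdist G w z (pv (j + 1) z) = 0 :=
        le_antisymm ((hqmin u hu1).trans_eq ((gdist_comm hwsym u z) ▸ hd)) (zero_le)
      have hHzq : gdist (spanGraph G w A pv k P) w z (pv (j + 1) z) = 0 :=
        le_antisymm ((dH_le_bunch hP hz hz1
          (Or.inr ⟨j + 1, lt_add_one j, hjk, hne, rfl⟩)).trans_eq hGzq) (zero_le)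
      have hGuq : gdist G w u (pv (j + 1) z) = 0 := by
        refine le_antisymm ?_ (zero_le)
        calc gdist G w u (pv (j + 1) z) ≤ gdist G w u z + gdist G w z (pv (j + 1) z) :=
              gdist_triangle G w _ _ _
          _ = 0 := by rw [hd, hGzq, add_zero]
      have hHuq := ih (j + 1) u (pv (j + 1) z) (by omega) hu1 hqA hGuq
      refine le_antisymm ?_ (zero_le)
      calc gdist (spanGraph G w A pv k P) w u z
          ≤ gdist (spanGraph G w A pv k P) w u (pv (j + 1) z) +
            gdist (spanGraph G w A pv k P) w (pv (j + 1) z) z := gdist_triangle _ w _ _ _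
        _ = 0 := by rw [hHuq, gdist_comm hwsymH, hHzq, add_zero]
    by_cases hu1 : u ∈ A (j + 1) <;> by_cases hz1 : z ∈ A (j + 1)
    · exact ih (j + 1) u z (by omega) hu1 hz1 hd
    · exact key u z hu hz hu1 hz1 hd
    · rw [gdist_comm hwsymH]
      exact key z u hz hu hz1 hu1 ((gdist_comm hwsym u z) ▸ hd)
    · by_cases hcond : ∀ a ∈ A (j + 1), gdist G w u z < gdist G w u a / 2
      · exact le_antisymm ((dH_le_bunch hP hu hu1 (Or.inl ⟨hz, hcond⟩)).trans_eq hd) (zero_le)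
      · push_neg at hcond
        obtain ⟨a, ha, hle⟩ := hcond
        have hGua : gdist G w u a = 0 := by
          rw [hd] at hle
          have h2 : gdist G w u a / 2 = 0 := le_antisymm hle (zero_le)
          rcases (ENNReal.div_eq_zero_iff.mp h2) with h | h
          · exact h
          · exact absurd h (by norm_num)
        have hne : (A (j + 1)).Nonempty := ⟨a, ha⟩
        have hjk : j + 1 < k := nonempty_lt_k hAnest hAk hne
        obtain ⟨hpA, hpmin⟩ := hpv (j + 1) hjk u hne
        obtain ⟨hqA, hqmin⟩ := hpv (j + 1) hjk z hne
        set p := pv (j + 1) u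
        set q := pv (j + 1) z
        have hGup : gdist G w u p = 0 := le_antisymm ((hpmin a ha).trans_eq hGua) (zero_le)
        have hGzq : gdist G w z q = 0 := by
          refine le_antisymm ((hqmin p hpA).trans ?_) (zero_le)
          calc gdist G w z p ≤ gdist G w z u + gdist G w u p := gdist_triangle G w _ _ _
            _ = 0 := by rw [gdist_comm hwsym, hd, hGup, add_zero]
        have hGpq : gdist G w p q = 0 := by
          refine le_antisymm ?_ (zero_le)
          calc gdist G w p q ≤ gdist G w p u + (gdist G w u z + gdist G w z q) :=
                (gdist_triangle G w p u q).trans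
                  (add_le_add_right (gdist_triangle G w u z q) _)
            _ = 0 := by rw [gdist_comm hwsym p u, hGup, hd, hGzq]; simp
        have hHup : gdist (spanGraph G w A pv k P) w u p = 0 :=
          le_antisymm ((dH_le_bunch hP hu hu1
            (Or.inr ⟨j + 1, lt_add_one j, hjk, hne, rfl⟩)).trans_eq hGup) (zero_le)
        have hHzq : gdist (spanGraph G w A pv k P) w z q = 0 :=
          le_antisymm ((dH_le_bunch hP hz hz1
            (Or.inr ⟨j + 1, lt_add_one j, hjk, hne, rfl⟩)).trans_eq hGzq) (zero_le)
        have hHpq := ih (j + 1) p q (by omega) hpA hqA hGpq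
        refine le_antisymm ?_ (zero_le)
        calc gdist (spanGraph G w A pv k P) w u z
            ≤ gdist (spanGraph G w A pv k P) w u p +
              (gdist (spanGraph G w A pv k P) w p q +
               gdist (spanGraph G w A pv k P) w q z) :=
              (gdist_triangle _ w u p z).trans
                (add_le_add_right (gdist_triangle _ w p q z) _)
          _ = 0 := by rw [hHup, hHpq, gdist_comm hwsymH q z, hHzq]; simp

end Main

/-- Lemma D.3: with `m = max{d_G(x,p_i(x)), d_G(y,p_i(y)), d_G(x,y)}`, either
`d_H(x,y) ≤ 5m`, or `A_{i+1} ≠ ∅` and `d_H(x, p_{i+1}(x)) ≤ 7m`. -/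
theorem statement12 [Fintype V] (G : SimpleGraph V) (hconn : G.Connected)
    (w : V → V → ℝ≥0∞) (hwsym : ∀ u v, G.Adj u v → w u v = w v u)
    (hwfin : ∀ u v, G.Adj u v → w u v ≠ ⊤)
    (k : ℕ) (hk : 1 ≤ k) (A : ℕ → Set V) (hA0 : A 0 = Set.univ)
    (hAnest : ∀ i, A (i + 1) ⊆ A i) (hAk : A k = ∅)
    (pv : ℕ → V → V)
    (hpv : ∀ i, i < k → ∀ v : V, (A i).Nonempty →
      pv i v ∈ A i ∧ ∀ a ∈ A i, gdist G w v (pv i v) ≤ gdist G w v a)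
    (P : ∀ u v : V, G.Walk u v)
    (hP : ∀ u v i, u ∈ A i → u ∉ A (i + 1) → v ∈ halfBunch G w A pv k i u →
      (P u v).IsPath ∧ wWeight w (P u v) = gdist G w u v)
    (i : ℕ) (hi : i < k) (hAi : (A i).Nonempty) (x y : V) :
    gdist (spanGraph G w A pv k P) w x y ≤
        5 * max (gdist G w x (pv i x)) (max (gdist G w y (pv i y)) (gdist G w x y)) ∨
      ((A (i + 1)).Nonempty ∧
        gdist (spanGraph G w A pv k P) w x (pv (i + 1) x) ≤
          7 * max (gdist G w x (pv i x)) (max (gdist G w y (pv i y)) (gdist G w x y))) := by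
  set H := spanGraph G w A pv k P with hH
  set m := max (gdist G w x (pv i x)) (max (gdist G w y (pv i y)) (gdist G w x y)) with hm
  have hwsymH : ∀ u v, H.Adj u v → w u v = w v u :=
    fun u v h => hwsym u v (spanGraph_le_adj h)
  have hm1 : gdist G w x (pv i x) ≤ m := le_max_left _ _
  have hm2 : gdist G w y (pv i y) ≤ m := (le_max_left _ _).trans (le_max_right _ _)
  have hm3 : gdist G w x y ≤ m := (le_max_right _ _).trans (le_max_right _ _)
  by_cases hx1 : x ∈ A (i + 1)
  · -- degenerate case: x is itself in A (i+1)
    have hne : (A (i + 1)).Nonempty := ⟨x, hx1⟩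
    have hik : i + 1 < k := nonempty_lt_k hAnest hAk hne
    obtain ⟨hzA, hzmin⟩ := hpv (i + 1) hik x hne
    have hd0 : gdist G w x (pv (i + 1) x) = 0 :=
      le_antisymm ((hzmin x hx1).trans_eq (gdist_self G w x)) (zero_le)
    have h0 := Qlem hwsym hA0 hAnest hAk hpv hP k (i + 1) x (pv (i + 1) x)
      (by omega) hx1 hzA hd0
    exact Or.inr ⟨hne, h0.le.trans (zero_le)⟩
  · have hXex : ∃ X ∈ A i, gdist H w x X ≤ gdist G w x (pv i x) ∧
        gdist G w x X ≤ gdist G w x (pv i x) := by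
      by_cases hxi : x ∈ A i
      · exact ⟨x, hxi, (gdist_self H w x).le.trans (zero_le),
          (gdist_self G w x).le.trans (zero_le)⟩
      · exact ⟨pv i x, (hpv i hi x hAi).1, dH_pivot hA0 hP hi hAi hxi, le_rfl⟩
    have hYex : ∃ Y ∈ A i, gdist H w y Y ≤ gdist G w y (pv i y) ∧
        gdist G w y Y ≤ gdist G w y (pv i y) := by
      by_cases hyi : y ∈ A i
      · exact ⟨y, hyi, (gdist_self H w y).le.trans (zero_le),
          (gdist_self G w y).le.trans (zero_le)⟩
      · exact ⟨pv i y, (hpv i hi y hAi).1, dH_pivot hA0 hP hi hAi hyi, le_rfl⟩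
    obtain ⟨X, hXA, hHxX, hGxX⟩ := hXex
    obtain ⟨Y, hYA, hHyY, hGyY⟩ := hYex
    have hGxXm : gdist G w x X ≤ m := hGxX.trans hm1
    have hGyYm : gdist G w y Y ≤ m := hGyY.trans hm2
    have hHxXm : gdist H w x X ≤ m := hHxX.trans hm1
    have hHyYm : gdist H w y Y ≤ m := hHyY.trans hm2
    have hXY : gdist G w X Y ≤ m + m + m := by
      calc gdist G w X Y ≤ gdist G w X x + (gdist G w x y + gdist G w y Y) :=
            (gdist_triangle G w X x Y).trans (add_le_add_right (gdist_triangle G w x y Y) _)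
        _ ≤ m + (m + m) := by
            refine add_le_add ?_ (add_le_add hm3 hGyYm)
            rw [gdist_comm hwsym]
            exact hGxXm
        _ = m + m + m := by ring
    by_cases hXi1 : X ∈ A (i + 1)
    · -- X is in A (i+1): pivot of x at level i+1 is near
      have hne : (A (i + 1)).Nonempty := ⟨X, hXi1⟩
      have hik : i + 1 < k := nonempty_lt_k hAnest hAk hne
      obtain ⟨hzA, hzmin⟩ := hpv (i + 1) hik x hne
      refine Or.inr ⟨hne, ?_⟩
      calc gdist H w x (pv (i + 1) x) ≤ gdist G w x (pv (i + 1) x) :=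
            dH_pivot hA0 hP hik hne hx1
        _ ≤ gdist G w x X := hzmin X hXi1
        _ ≤ m := hGxXm
        _ ≤ 7 * m := by
            rw [show (7 : ℝ≥0∞) * m = m + 6 * m by ring]
            exact le_add_right le_rfl
    by_cases hYi1 : Y ∈ A (i + 1)
    · have hne : (A (i + 1)).Nonempty := ⟨Y, hYi1⟩
      have hik : i + 1 < k := nonempty_lt_k hAnest hAk hne
      obtain ⟨hzA, hzmin⟩ := hpv (i + 1) hik x hne
      refine Or.inr ⟨hne, ?_⟩
      calc gdist H w x (pv (i + 1) x) ≤ gdist G w x (pv (i + 1) x) :=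
            dH_pivot hA0 hP hik hne hx1
        _ ≤ gdist G w x Y := hzmin Y hYi1
        _ ≤ gdist G w x y + gdist G w y Y := gdist_triangle G w x y Y
        _ ≤ m + m := add_le_add hm3 hGyYm
        _ ≤ 7 * m := by
            rw [show (7 : ℝ≥0∞) * m = m + m + 5 * m by ring]
            exact le_add_right le_rfl
    by_cases hcond : ∀ a ∈ A (i + 1), gdist G w X Y < gdist G w X a / 2
    · -- Y is in the half-bunch of X
      have hHXY : gdist H w X Y ≤ gdist G w X Y :=
        dH_le_bunch hP hXA hXi1 (Or.inl ⟨hYA, hcond⟩)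
      refine Or.inl ?_
      calc gdist H w x y ≤ gdist H w x X + (gdist H w X Y + gdist H w Y y) :=
            (gdist_triangle H w x X y).trans (add_le_add_right (gdist_triangle H w X Y y) _)
        _ ≤ m + ((m + m + m) + m) := by
            refine add_le_add hHxXm (add_le_add (hHXY.trans hXY) ?_)
            rw [gdist_comm hwsymH]
            exact hHyYm
        _ = 5 * m := by ring
    · push_neg at hcond
      obtain ⟨a, ha, hle⟩ := hcond
      have hne : (A (i + 1)).Nonempty := ⟨a, ha⟩
      have hik : i + 1 < k := nonempty_lt_k hAnest hAk hne
      obtain ⟨hzA, hzmin⟩ := hpv (i + 1) hik x hne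
      have hXa : gdist G w X a ≤ 2 * (m + m + m) := by
        calc gdist G w X a = 2 * (gdist G w X a / 2) := by
              rw [ENNReal.mul_div_cancel' (by norm_num) (by norm_num)]
          _ ≤ 2 * gdist G w X Y := mul_le_mul_right hle 2
          _ ≤ 2 * (m + m + m) := mul_le_mul_right hXY 2
      refine Or.inr ⟨hne, ?_⟩
      calc gdist H w x (pv (i + 1) x) ≤ gdist G w x (pv (i + 1) x) :=
            dH_pivot hA0 hP hik hne hx1
        _ ≤ gdist G w x a := hzmin a ha
        _ ≤ gdist G w x X + gdist G w X a := gdist_triangle G w x X a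
        _ ≤ m + 2 * (m + m + m) := add_le_add hGxXm hXa
        _ = 7 * m := by ring

end ASP
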